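/- For every natural number m with m ≥ 2, the sum over j from 1 to m−1 of cos(2πj/m)/sin⁴(πj/m) equals (m⁴ − 20m² + 19)/45. -/

import Mathlib

open Real Finset

/-- backward difference operator -/
private def dstep (f : ℂ → ℂ) : ℂ → ℂ := fun x => f x - f (x - 1)

/-- the interpolating polynomial -/
private noncomputable def PP (μ : ℂ) : ℂ → ℂ :=
  fun x => (-x^4 + 2*μ*x^3 - (μ^2+4)*x^2 + 4*μ*x) / (12*μ)

/-- telescoping lemma for sums over roots of unity -/
private lemma tele (n : ℕ) (ζ : ℂ) (hζ : ζ^(n+1) = 1) (f : ℂ → ℂ) :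
    (1 - ζ) * ∑ a ∈ Finset.range (n+1), f a * ζ^a
      = (∑ a ∈ Finset.range (n+1), dstep f a * ζ^a) + (f (-1) - f (n:ℂ)) := by
  have e1 : ∑ a ∈ Finset.range (n+1), f ((a:ℂ)-1) * ζ^a
      = (∑ a ∈ Finset.range n, f a * ζ^(a+1)) + f (-1) := by
    rw [Finset.sum_range_succ']
    congr 1
    · refine Finset.sum_congr rfl fun a _ => ?_
      push_cast
      ring_nf
    · norm_num
  have e2 : ζ * ∑ a ∈ Finset.range (n+1), f a * ζ^a
      = (∑ a ∈ Finset.range n, f a * ζ^(a+1)) + f (n:ℂ) := by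
    rw [Finset.mul_sum]
    rw [Finset.sum_congr rfl (fun a (_ : a ∈ Finset.range (n+1)) =>
      (show ζ * (f a * ζ^a) = f a * ζ^(a+1) by ring))]
    rw [Finset.sum_range_succ, hζ, mul_one]
  have e3 : ∑ a ∈ Finset.range (n+1), dstep f a * ζ^a
      = (∑ a ∈ Finset.range (n+1), f a * ζ^a)
        - ∑ a ∈ Finset.range (n+1), f ((a:ℂ)-1) * ζ^a := by
    rw [← Finset.sum_sub_distrib]
    exact Finset.sum_congr rfl fun a _ => by simp only [dstep]; ring
  linear_combination (-1 : ℂ) * e3 + e1 - e2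

private lemma key (m : ℕ) (hm : 1 ≤ m) (ζ : ℂ) (hζ : ζ^m = 1) (hζ1 : ζ ≠ 1) :
    (1 - ζ)^4 * ∑ a ∈ Finset.range m, PP (m:ℂ) a * ζ^a = ζ^3 + ζ := by
  obtain ⟨n, rfl⟩ : ∃ n, m = n + 1 := ⟨m - 1, by omega⟩
  have hone : ((n:ℂ) + 1) ≠ 0 := by
    have := Nat.cast_ne_zero (R := ℂ) (n := n+1) |>.mpr (Nat.succ_ne_zero n)
    push_cast at this
    exact this
  have hcast : ((n+1:ℕ):ℂ) = (n:ℂ) + 1 := by push_cast; ring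
  have h1 := tele n ζ hζ (PP ((n+1:ℕ):ℂ))
  have h2 := tele n ζ hζ (dstep (PP ((n+1:ℕ):ℂ)))
  have h3 := tele n ζ hζ (dstep (dstep (PP ((n+1:ℕ):ℂ))))
  have h4 := tele n ζ hζ (dstep (dstep (dstep (PP ((n+1:ℕ):ℂ)))))
  have hC0 : PP ((n+1:ℕ):ℂ) (-1) - PP ((n+1:ℕ):ℂ) (n:ℂ) = -1 := by
    simp only [PP, hcast]
    field_simp
    ring
  have hC1 : dstep (PP ((n+1:ℕ):ℂ)) (-1) - dstep (PP ((n+1:ℕ):ℂ)) (n:ℂ) = 3 := by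
    simp only [dstep, PP, hcast]
    field_simp
    ring
  have hC2 : dstep (dstep (PP ((n+1:ℕ):ℂ))) (-1)
      - dstep (dstep (PP ((n+1:ℕ):ℂ))) (n:ℂ) = -4 := by
    simp only [dstep, PP, hcast]
    field_simp
    ring
  have hC3 : dstep (dstep (dstep (PP ((n+1:ℕ):ℂ)))) (-1)
      - dstep (dstep (dstep (PP ((n+1:ℕ):ℂ)))) (n:ℂ) = 2 := by
    simp only [dstep, PP, hcast]
    field_simp
    ring
  have hconst : ∀ y : ℂ,
      dstep (dstep (dstep (dstep (PP ((n+1:ℕ):ℂ))))) y = -2/((n:ℂ)+1) := by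
    intro y
    simp only [dstep, PP, hcast]
    field_simp
    ring
  have hA4 : ∑ a ∈ Finset.range (n+1),
      dstep (dstep (dstep (dstep (PP ((n+1:ℕ):ℂ))))) a * ζ^a = 0 := by
    calc ∑ a ∈ Finset.range (n+1),
        dstep (dstep (dstep (dstep (PP ((n+1:ℕ):ℂ))))) a * ζ^a
        = ∑ a ∈ Finset.range (n+1), (-2/((n:ℂ)+1)) * ζ^a :=
          Finset.sum_congr rfl fun a _ => by rw [hconst]
      _ = (-2/((n:ℂ)+1)) * ∑ a ∈ Finset.range (n+1), ζ^a := by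
          rw [Finset.mul_sum]
      _ = 0 := by rw [geom_sum_eq hζ1, hζ]; simp
  linear_combination (1-ζ)^3*h1 + (1-ζ)^2*h2 + (1-ζ)*h3 + h4 + hA4
    + (1-ζ)^3*hC0 + (1-ζ)^2*hC1 + (1-ζ)*hC2 + hC3

private lemma one_sub_sq_exp (x : ℂ) :
    1 - Complex.exp (x*Complex.I)^2
      = -2*Complex.I*Complex.sin x*Complex.exp (x*Complex.I) := by
  set w := Complex.exp (x*Complex.I) with hw
  set u := Complex.exp (-x*Complex.I) with hu'
  have hu : u * w = 1 := by
    rw [hu', hw, ← Complex.exp_add]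
    simp
  have h2s : 2 * Complex.sin x = (u - w) * Complex.I := Complex.two_sin x
  linear_combination (Complex.I*w)*h2s + (u*w - w^2)*Complex.I_sq - hu

private lemma exp_sq_ne_one (x : ℝ) (hs : Real.sin x ≠ 0) :
    Complex.exp ((x:ℂ)*Complex.I)^2 ≠ 1 := by
  have hs' : Complex.sin (x:ℂ) ≠ 0 := by
    rw [← Complex.ofReal_sin]
    exact_mod_cast hs
  have h := one_sub_sq_exp (x:ℂ)
  intro hcon
  rw [hcon, sub_self] at h
  have := h.symm
  have hne : -2*Complex.I*Complex.sin (x:ℂ)*Complex.exp ((x:ℂ)*Complex.I) ≠ 0 := by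
    apply mul_ne_zero
    apply mul_ne_zero
    apply mul_ne_zero
    · norm_num
    · exact Complex.I_ne_zero
    · exact hs'
    · exact Complex.exp_ne_zero _
  exact hne this

private lemma euler (x : ℝ) (hs : Real.sin x ≠ 0) :
    ((Real.cos (2*x) / Real.sin x ^ 4 : ℝ) : ℂ)
      = 8 * ((Complex.exp ((x:ℂ)*Complex.I)^2)^3 + Complex.exp ((x:ℂ)*Complex.I)^2)
        / (1 - Complex.exp ((x:ℂ)*Complex.I)^2)^4 := by
  set w := Complex.exp ((x:ℂ)*Complex.I) with hw
  set u := Complex.exp (-(x:ℂ)*Complex.I) with hudef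
  have hw0 : w ≠ 0 := Complex.exp_ne_zero _
  have hu : u * w = 1 := by
    rw [hudef, hw, ← Complex.exp_add]
    simp
  have huw : u = w⁻¹ := eq_inv_of_mul_eq_one_left hu
  have h2s : 2 * Complex.sin (x:ℂ) = (u - w) * Complex.I := Complex.two_sin (x:ℂ)
  have hsin' : Complex.sin (x:ℂ) = (w⁻¹ - w) * Complex.I / 2 := by
    rw [huw] at h2s
    linear_combination h2s / 2
  have h2c : 2 * Complex.cos (2*(x:ℂ)) = w^2 + (w⁻¹)^2 := by
    have h := Complex.two_cos (2*(x:ℂ))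
    rw [show (2*(x:ℂ))*Complex.I = (x:ℂ)*Complex.I + (x:ℂ)*Complex.I by ring,
      show -(2*(x:ℂ))*Complex.I = -(x:ℂ)*Complex.I + -(x:ℂ)*Complex.I by ring,
      Complex.exp_add, Complex.exp_add] at h
    rw [h, ← hw, ← hudef, huw]
    ring
  have hcos' : Complex.cos (2*(x:ℂ)) = (w^2 + (w⁻¹)^2)/2 := by
    linear_combination h2c / 2
  have hs' : Complex.sin (x:ℂ) ≠ 0 := by
    rw [← Complex.ofReal_sin]
    exact_mod_cast hs
  have hne : (1:ℂ) - w^2 ≠ 0 := by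
    rw [hw, one_sub_sq_exp]
    apply mul_ne_zero
    apply mul_ne_zero
    apply mul_ne_zero
    · norm_num
    · exact Complex.I_ne_zero
    · exact hs'
    · exact Complex.exp_ne_zero _
  have hI4 : Complex.I^4 = 1 := by
    rw [show (4:ℕ) = 2*2 from rfl, pow_mul, Complex.I_sq]
    norm_num
  rw [Complex.ofReal_div, Complex.ofReal_pow, Complex.ofReal_cos, Complex.ofReal_sin]
  rw [show ((2*x : ℝ) : ℂ) = 2*(x:ℂ) by push_cast; ring]
  rw [div_eq_div_iff (pow_ne_zero 4 hs') (pow_ne_zero 4 hne)]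
  rw [hcos', hsin', div_pow, mul_pow, hI4, mul_one]
  field_simp
  ring

private lemma sum_pow1 (n : ℕ) : ∑ a ∈ Finset.range n, (a:ℂ) = n*((n:ℂ)-1)/2 := by
  induction n with
  | zero => simp
  | succ k ih => rw [Finset.sum_range_succ, ih]; push_cast; ring

private lemma sum_pow2 (n : ℕ) :
    ∑ a ∈ Finset.range n, (a:ℂ)^2 = n*((n:ℂ)-1)*(2*n-1)/6 := by
  induction n with
  | zero => simp
  | succ k ih => rw [Finset.sum_range_succ, ih]; push_cast; ring

private lemma sum_pow3 (n : ℕ) :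
    ∑ a ∈ Finset.range n, (a:ℂ)^3 = (n:ℂ)^2*((n:ℂ)-1)^2/4 := by
  induction n with
  | zero => simp
  | succ k ih => rw [Finset.sum_range_succ, ih]; push_cast; ring

private lemma sum_pow4 (n : ℕ) :
    ∑ a ∈ Finset.range n, (a:ℂ)^4
      = n*((n:ℂ)-1)*(2*n-1)*(3*(n:ℂ)^2-3*n-1)/30 := by
  induction n with
  | zero => simp
  | succ k ih => rw [Finset.sum_range_succ, ih]; push_cast; ring

private lemma sum_PP (m : ℕ) (hm : 1 ≤ m) :
    ∑ a ∈ Finset.range m, PP (m:ℂ) a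
      = -(((m:ℂ)^4 - 20*(m:ℂ)^2 + 19)/360) := by
  have hmc : (m:ℂ) ≠ 0 := Nat.cast_ne_zero.mpr (by omega)
  simp only [PP]
  rw [← Finset.sum_div]
  have hnum : ∑ a ∈ Finset.range m,
      (-(a:ℂ)^4 + 2*(m:ℂ)*(a:ℂ)^3 - ((m:ℂ)^2+4)*(a:ℂ)^2 + 4*(m:ℂ)*(a:ℂ))
      = -(∑ a ∈ Finset.range m, (a:ℂ)^4)
        + 2*(m:ℂ)*(∑ a ∈ Finset.range m, (a:ℂ)^3)
        - ((m:ℂ)^2+4)*(∑ a ∈ Finset.range m, (a:ℂ)^2)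
        + 4*(m:ℂ)*(∑ a ∈ Finset.range m, (a:ℂ)) := by
    simp only [Finset.sum_add_distrib, Finset.sum_sub_distrib, ← Finset.mul_sum,
      Finset.sum_neg_distrib]
  rw [hnum, sum_pow1, sum_pow2, sum_pow3, sum_pow4]
  field_simp
  ring

/-- Equation (3.5): for every integer `m ≥ 2`,
`∑_{j=1}^{m-1} cos(2πj/m) / sin⁴(πj/m) = (m⁴ − 20m² + 19)/45`. -/
theorem sum_cos_csc_pow_four (m : ℕ) (hm : 2 ≤ m) :
    ∑ j ∈ Finset.Icc 1 (m - 1), Real.cos (2 * π * j / m) / (Real.sin (π * j / m)) ^ 4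
      = ((m : ℝ) ^ 4 - 20 * m ^ 2 + 19) / 45 := by
  have hmc : (m:ℂ) ≠ 0 := Nat.cast_ne_zero.mpr (by omega)
  have hmr : (0:ℝ) < m := by positivity
  have hIcc : Finset.Icc 1 (m-1) = Finset.Ico 1 m := by
    rw [← Finset.Ico_add_one_right_eq_Icc]
    congr 1
    omega
  have hsin : ∀ k : ℕ, 1 ≤ k → k < m → Real.sin (π*k/m) ≠ 0 := by
    intro k hk1 hk2
    have hk1' : (0:ℝ) < k := by exact_mod_cast hk1
    have hk2' : (k:ℝ) < m := by exact_mod_cast hk2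
    have h1 : 0 < π*k/m := by positivity
    have h2 : π*k/m < π := by
      rw [div_lt_iff₀ hmr]
      nlinarith [Real.pi_pos]
    exact ne_of_gt (Real.sin_pos_of_pos_of_lt_pi h1 h2)
  have hpow : ∀ k : ℕ, (Complex.exp (((π*k/m : ℝ):ℂ)*Complex.I)^2)^m = 1 := by
    intro k
    rw [← pow_mul, ← Complex.exp_nat_mul]
    rw [show ((2*m : ℕ):ℂ) * (((π*k/m : ℝ):ℂ)*Complex.I) = (k:ℂ) * (2*(π:ℝ)*Complex.I) by
      push_cast
      field_simp]
    exact Complex.exp_nat_mul_two_pi_mul_I k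
  have hswapexp : ∀ j a : ℕ,
      (Complex.exp (((π*j/m : ℝ):ℂ)*Complex.I)^2)^a
        = (Complex.exp (((π*a/m : ℝ):ℂ)*Complex.I)^2)^j := by
    intro j a
    rw [← pow_mul, ← pow_mul, ← Complex.exp_nat_mul, ← Complex.exp_nat_mul]
    congr 1
    push_cast
    ring
  have key' : ∀ j ∈ Finset.Ico 1 m,
      ((Real.cos (2*π*j/m) / Real.sin (π*j/m)^4 : ℝ) : ℂ)
        = 8 * ∑ a ∈ Finset.range m,
            PP (m:ℂ) a * (Complex.exp (((π*j/m : ℝ):ℂ)*Complex.I)^2)^a := by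
    intro j hj
    rw [Finset.mem_Ico] at hj
    have hsj := hsin j hj.1 hj.2
    rw [show (2*π*(j:ℝ)/m) = 2*(π*j/m) by ring, euler _ hsj]
    have hζ1 : Complex.exp (((π*j/m : ℝ):ℂ)*Complex.I)^2 ≠ 1 := exp_sq_ne_one _ hsj
    have hne : (1:ℂ) - Complex.exp (((π*j/m : ℝ):ℂ)*Complex.I)^2 ≠ 0 :=
      sub_ne_zero.mpr (Ne.symm hζ1)
    rw [div_eq_iff (pow_ne_zero 4 hne)]
    have hk := key m (by omega) _ (hpow j) hζ1
    linear_combination (-8) * hk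
  have hgeo : ∀ a ∈ Finset.Ico 1 m,
      ∑ j ∈ Finset.Ico 1 m, (Complex.exp (((π*a/m : ℝ):ℂ)*Complex.I)^2)^j = -1 := by
    intro a ha
    rw [Finset.mem_Ico] at ha
    have hζ1 : Complex.exp (((π*a/m : ℝ):ℂ)*Complex.I)^2 ≠ 1 := exp_sq_ne_one _ (hsin a ha.1 ha.2)
    have hfull : ∑ j ∈ Finset.Ico 0 m,
        (Complex.exp (((π*a/m : ℝ):ℂ)*Complex.I)^2)^j = 0 := by
      rw [← Finset.range_eq_Ico, geom_sum_eq hζ1, hpow a]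
      simp
    have hsplit := Finset.sum_Ico_consecutive
      (f := fun j => (Complex.exp (((π*a/m : ℝ):ℂ)*Complex.I)^2)^j)
      (by omega : 0 ≤ 1) (by omega : 1 ≤ m)
    have hone : ∑ j ∈ Finset.Ico 0 1,
        (Complex.exp (((π*a/m : ℝ):ℂ)*Complex.I)^2)^j = 1 := by simp
    linear_combination hsplit + hfull - hone
  have hgeo0 : ∑ j ∈ Finset.Ico 1 m,
      (Complex.exp (((π*(0:ℕ)/m : ℝ):ℂ)*Complex.I)^2)^j = (m:ℂ) - 1 := by
    have h0 : Complex.exp (((π*(0:ℕ)/m : ℝ):ℂ)*Complex.I) = 1 := by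
      rw [show ((π*(0:ℕ)/m : ℝ):ℂ) = 0 by push_cast; ring]
      simp
    rw [h0]
    simp only [one_pow, Finset.sum_const, nsmul_eq_mul, mul_one, Nat.card_Ico]
    push_cast [Nat.cast_sub (by omega : 1 ≤ m)]
    ring
  have main : ((∑ j ∈ Finset.Icc 1 (m-1),
        Real.cos (2*π*j/m) / Real.sin (π*j/m)^4 : ℝ) : ℂ)
      = ((((m:ℝ)^4 - 20*(m:ℝ)^2 + 19)/45 : ℝ) : ℂ) := by
    rw [Complex.ofReal_sum, hIcc, Finset.sum_congr rfl key', ← Finset.mul_sum,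
      Finset.sum_comm]
    have hstep : ∀ a ∈ Finset.range m,
        ∑ j ∈ Finset.Ico 1 m,
            PP (m:ℂ) a * (Complex.exp (((π*j/m : ℝ):ℂ)*Complex.I)^2)^a
          = PP (m:ℂ) a * ∑ j ∈ Finset.Ico 1 m,
              (Complex.exp (((π*a/m : ℝ):ℂ)*Complex.I)^2)^j := by
      intro a _
      rw [Finset.mul_sum]
      exact Finset.sum_congr rfl fun j _ => by rw [hswapexp j a]
    rw [Finset.sum_congr rfl hstep, Finset.range_eq_Ico,
      ← Finset.sum_Ico_consecutive _ (by omega : 0 ≤ 1) (by omega : 1 ≤ m)]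
    have hz : ∑ a ∈ Finset.Ico (0:ℕ) 1,
        PP (m:ℂ) a * (∑ j ∈ Finset.Ico 1 m,
          (Complex.exp (((π*a/m : ℝ):ℂ)*Complex.I)^2)^j) = 0 := by
      rw [show Finset.Ico (0:ℕ) 1 = {0} from rfl, Finset.sum_singleton]
      have : PP (m:ℂ) ((0:ℕ):ℂ) = 0 := by
        simp [PP]
      rw [this, zero_mul]
    have hrest : ∑ a ∈ Finset.Ico 1 m,
        PP (m:ℂ) a * (∑ j ∈ Finset.Ico 1 m,
          (Complex.exp (((π*a/m : ℝ):ℂ)*Complex.I)^2)^j)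
        = -∑ a ∈ Finset.Ico 1 m, PP (m:ℂ) a := by
      rw [← Finset.sum_neg_distrib]
      exact Finset.sum_congr rfl fun a ha => by rw [hgeo a ha]; ring
    rw [hz, hrest, zero_add]
    have hext : ∑ a ∈ Finset.Ico 1 m, PP (m:ℂ) a
        = ∑ a ∈ Finset.range m, PP (m:ℂ) a := by
      rw [Finset.range_eq_Ico,
        ← Finset.sum_Ico_consecutive _ (by omega : 0 ≤ 1) (by omega : 1 ≤ m),
        show Finset.Ico (0:ℕ) 1 = {0} from rfl, Finset.sum_singleton,
        show PP (m:ℂ) ((0:ℕ):ℂ) = 0 by simp [PP], zero_add]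
    rw [hext, sum_PP m (by omega)]
    push_cast
    ring
  exact_mod_cast main
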